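/- Suppose the multiplication matrices A_1, ..., A_n pairwise commute. Then x = (λ_1, ..., λ_n) is a solution of the system x^α = Σ_{β∈I} a_{α,β} x^β (α ∈ J) if and only if (λ_1, ..., λ_n) is a joint eigenvalue tuple of (A_1, ..., A_n), i.e., there exists a nonzero vector v with A_i^T v = λ_i v for all i. -/

import Mathlib

open Finset Matrix

/-- Total degree of a multi-index. -/
def mdeg {n : ℕ} (α : Fin n → ℕ) : ℕ := ∑ i, α i

/-- The set `I = {α ∈ ℤ₊ⁿ : |α| ≤ m}` of multi-indices of total degree at most `m`. -/
def Idx (n m : ℕ) : Finset (Fin n → ℕ) :=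
  (Fintype.piFinset fun _ => Finset.range (m + 1)).filter fun α => mdeg α ≤ m

/-- `I` is a lower set of multi-indices. -/
def IsLower {n : ℕ} (I : Finset (Fin n → ℕ)) : Prop :=
  ∀ β ∈ I, ∀ γ : Fin n → ℕ, (∀ i, γ i ≤ β i) → γ ∈ I

/-- `α` belongs to the border `J` of the lower set `I`. -/
def InBorder {n : ℕ} (I : Finset (Fin n → ℕ)) (α : Fin n → ℕ) : Prop :=
  α ∉ I ∧ ∃ β ∈ I, ∃ i : Fin n, α = β + Pi.single i 1

/-- The multiplication matrix `A_i`: its row indexed by `β ∈ I` is the standard basis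
vector at `β + e_i` if `β + e_i ∈ I`, and is `(a_{β+e_i,γ})_{γ∈I}` otherwise. -/
def multMat {K : Type*} [Field K] {n : ℕ} (I : Finset (Fin n → ℕ))
    (a : (Fin n → ℕ) → (Fin n → ℕ) → K) (i : Fin n) : Matrix ↥I ↥I K :=
  fun β γ =>
    if (β : Fin n → ℕ) + Pi.single i 1 ∈ I then
      (if (γ : Fin n → ℕ) = (β : Fin n → ℕ) + Pi.single i 1 then 1 else 0)
    else a ((β : Fin n → ℕ) + Pi.single i 1) γ

/-- The monomial vector `v(x) = (x^β)_{β ∈ I}`. -/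
def monVec {K : Type*} [Field K] {n : ℕ} (I : Finset (Fin n → ℕ)) (x : Fin n → K) :
    ↥I → K :=
  fun β => ∏ i, x i ^ (β : Fin n → ℕ) i

/-- `x` is a solution of the system (1): `x^α = Σ_{β∈I} a_{α,β} x^β` for all `|α| = m+1`. -/
def IsSol {K : Type*} [Field K] {n : ℕ} (m : ℕ)
    (a : (Fin n → ℕ) → (Fin n → ℕ) → K) (x : Fin n → K) : Prop :=
  ∀ α : Fin n → ℕ, mdeg α = m + 1 →
    ∏ i, x i ^ α i = ∑ β ∈ Idx n m, a α β * ∏ i, x i ^ β i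

/-- `x` is a solution of the system for a general lower set `I` with border `J`. -/
def IsSolB {K : Type*} [Field K] {n : ℕ} (I : Finset (Fin n → ℕ))
    (a : (Fin n → ℕ) → (Fin n → ℕ) → K) (x : Fin n → K) : Prop :=
  ∀ α : Fin n → ℕ, InBorder I α →
    ∏ i, x i ^ α i = ∑ β ∈ I, a α β * ∏ i, x i ^ β i

/-- A square matrix is diagonalizable (semisimple). -/
def Diagonalizable {K : Type*} [Field K] {ι : Type*} [Fintype ι] [DecidableEq ι]
    (A : Matrix ι ι K) : Prop :=
  ∃ P : Matrix ι ι K, IsUnit P.det ∧ (P⁻¹ * A * P).IsDiag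

/-- The polynomial `P_α = x^α − Σ_{β∈I} a_{α,β} x^β`. -/
noncomputable def Pb {K : Type*} [Field K] {n : ℕ} (I : Finset (Fin n → ℕ))
    (a : (Fin n → ℕ) → (Fin n → ℕ) → K) (α : Fin n → ℕ) : MvPolynomial (Fin n) K :=
  MvPolynomial.monomial (Finsupp.equivFunOnFinite.symm α) 1 -
    ∑ β ∈ I, MvPolynomial.C (a α β) * MvPolynomial.monomial (Finsupp.equivFunOnFinite.symm β) 1

/-- The ideal generated by the polynomials `P_α`, `α ∈ J`. -/
noncomputable def PIdeal {K : Type*} [Field K] {n : ℕ} (I : Finset (Fin n → ℕ))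
    (a : (Fin n → ℕ) → (Fin n → ℕ) → K) : Ideal (MvPolynomial (Fin n) K) :=
  Ideal.span {p | ∃ α : Fin n → ℕ, InBorder I α ∧ p = Pb I a α}


set_option maxHeartbeats 1000000 in
set_option synthInstance.maxHeartbeats 400000 in
lemma stmt17_nak_step {K : Type*} [Field K] {n : ℕ} {m : Type*} [Fintype m] [DecidableEq m]
    (B : Fin n → Matrix m m K) (hc : ∀ i j, B i * B j = B j * B i)
    (v : m → K) (hv : v ≠ 0) (h0 : ∀ i, B i *ᵥ v = 0) :
    (⨆ i, LinearMap.range (B i).mulVecLin) ≠ ⊤ := by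
  intro htop
  set f : Fin n → Module.End K (m → K) := fun i => (B i).mulVecLin with hf
  have hfc : ∀ x ∈ Set.range f, ∀ y ∈ Set.range f, x * y = y * x := by
    rintro _ ⟨i, rfl⟩ _ ⟨j, rfl⟩
    show f i * f j = f j * f i
    simp only [hf, Module.End.mul_eq_comp, ← Matrix.mulVecLin_mul, hc i j]
  set A := Algebra.adjoin K (Set.range f) with hA
  letI : CommRing ↥A := Algebra.adjoinCommRingOfComm K hfc
  have hsmul : ∀ (x : ↥A) (w : m → K), x • w = (x : Module.End K (m → K)) w := fun _ _ => rfl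
  have halg : ∀ (k : K) (w : m → K), (algebraMap K ↥A k) • w = k • w := by
    intro k w
    rw [hsmul]
    show (A.val (algebraMap K ↥A k)) w = k • w
    rw [AlgHom.commutes]
    rfl
  set g : Fin n → ↥A := fun i => ⟨f i, Algebra.subset_adjoin (Set.mem_range_self i)⟩ with hg
  set J : Ideal ↥A := Ideal.span (Set.range g) with hJ
  have hgsmul : ∀ (i : Fin n) (w : m → K), g i • w = B i *ᵥ w := by
    intro i w; rw [hsmul]; rfl
  -- top is finitely generated as an A-module
  have hfg : (⊤ : Submodule ↥A (m → K)).FG := by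
    rw [Submodule.fg_def]
    refine ⟨Set.range fun b : m => (Pi.single b 1 : m → K), Set.finite_range _, ?_⟩
    refine le_antisymm le_top ?_
    intro w _
    have hw : w = ∑ b : m, (algebraMap K ↥A (w b)) • (Pi.single b 1 : m → K) := by
      funext c
      rw [Finset.sum_apply]
      simp only [halg]
      rw [Finset.sum_eq_single c]
      · simp
      · intro b _ hb; simp [Pi.single_eq_of_ne (Ne.symm hb)]
      · simp
    rw [hw]
    exact Submodule.sum_mem _ fun b _ => Submodule.smul_mem _ _
      (Submodule.subset_span (Set.mem_range_self b))
  -- top ≤ J • top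
  have hle : (⊤ : Submodule ↥A (m → K)) ≤ J • (⊤ : Submodule ↥A (m → K)) := by
    intro w _
    have hw : w ∈ (⨆ i, LinearMap.range (B i).mulVecLin) := htop ▸ Submodule.mem_top
    refine Submodule.iSup_induction _ (motive := fun x => x ∈ J • (⊤ : Submodule ↥A (m → K))) hw ?_ ?_ ?_
    · rintro i x ⟨u, rfl⟩
      have : (B i).mulVecLin u = g i • u := by rw [hgsmul]; rfl
      rw [this]
      exact Submodule.smul_mem_smul (Ideal.subset_span (Set.mem_range_self i)) Submodule.mem_top
    · exact Submodule.zero_mem _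
    · intro x y hx hy; exact Submodule.add_mem _ hx hy
  obtain ⟨r, hr1, hr0⟩ :=
    Submodule.exists_sub_one_mem_and_smul_eq_zero_of_fg_of_le_smul J ⊤ hfg hle
  have hJv : ∀ s ∈ J, s • v = 0 := by
    intro s hs
    refine Submodule.span_induction ?_ ?_ ?_ ?_ hs
    · rintro _ ⟨i, rfl⟩; rw [hgsmul]; exact h0 i
    · rw [zero_smul]
    · intro x y _ _ hx hy; rw [add_smul, hx, hy, add_zero]
    · intro x y _ hy; rw [smul_eq_mul, mul_smul, hy, smul_zero]
  have hv0 : v = 0 := by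
    have h1 : v = r • v - (r - 1) • v := by rw [sub_smul, one_smul, sub_sub_cancel]
    rw [h1, hr0 v Submodule.mem_top, hJv _ hr1, sub_zero]
  exact hv hv0


lemma stmt17_transpose_ker {K : Type*} [Field K] {n : ℕ} {m : Type*} [Fintype m] [DecidableEq m]
    (B : Fin n → Matrix m m K)
    (hne : (⨆ i, LinearMap.range (B i).mulVecLin) ≠ ⊤) :
    ∃ w : m → K, w ≠ 0 ∧ ∀ i, (B i)ᵀ *ᵥ w = 0 := by
  set D : Matrix (Fin n × m) m K := Matrix.of (fun p γ => B p.1 γ p.2) with hD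
  have hrange : LinearMap.range Dᵀ.mulVecLin = ⨆ i, LinearMap.range (B i).mulVecLin := by
    apply le_antisymm
    · rintro _ ⟨u, rfl⟩
      have : Dᵀ.mulVecLin u = ∑ i : Fin n, B i *ᵥ (fun β => u (i, β)) := by
        funext γ
        simp only [Matrix.mulVecLin_apply, Matrix.mulVec, dotProduct,
          Fintype.sum_prod_type, Finset.sum_apply]
        exact Finset.sum_congr rfl fun i _ => Finset.sum_congr rfl fun β _ => rfl
      rw [this]
      exact Submodule.sum_mem _ fun i _ =>
        Submodule.mem_iSup_of_mem i ⟨_, rfl⟩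
    · refine iSup_le fun i => ?_
      rintro _ ⟨u, rfl⟩
      refine ⟨fun p => if p.1 = i then u p.2 else 0, ?_⟩
      funext γ
      simp only [Matrix.mulVecLin_apply, Matrix.mulVec, dotProduct,
        Fintype.sum_prod_type]
      rw [Finset.sum_eq_single i]
      · simp [hD]
      · intro j _ hj; simp [hj]
      · simp
  have hrk : D.rank < Fintype.card m := by
    have h1 : Dᵀ.rank < Fintype.card m := by
      have : LinearMap.range Dᵀ.mulVecLin < ⊤ := lt_top_iff_ne_top.2 (hrange ▸ hne)
      have h2 := Submodule.finrank_lt (s := LinearMap.range Dᵀ.mulVecLin) this.ne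
      rwa [Module.finrank_pi] at h2
    rwa [Matrix.rank_transpose] at h1
  have hker : LinearMap.ker D.mulVecLin ≠ ⊥ := by
    intro hbot
    have := LinearMap.finrank_range_add_finrank_ker D.mulVecLin
    rw [hbot, finrank_bot, add_zero, Module.finrank_pi] at this
    rw [Matrix.rank] at hrk
    omega
  obtain ⟨w, hw, hw0⟩ := Submodule.exists_mem_ne_zero_of_ne_bot hker
  refine ⟨w, hw0, fun i => ?_⟩
  have hDw : D *ᵥ w = 0 := hw
  funext β
  have := congrFun hDw (i, β)
  simpa only [Matrix.mulVec, dotProduct, hD, Matrix.of_apply, Matrix.transpose_apply,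
    Pi.zero_apply] using this

-- product of powers at a shifted multi-index
lemma stmt17_prod_pow_single {K : Type*} [CommMonoid K] {n : ℕ} (x : Fin n → K)
    (β : Fin n → ℕ) (i : Fin n) :
    ∏ j, x j ^ ((β + Pi.single i 1 : Fin n → ℕ) j) = x i * ∏ j, x j ^ β j := by
  simp only [Pi.add_apply, pow_add, Finset.prod_mul_distrib]
  rw [mul_comm]
  congr 1
  rw [Finset.prod_eq_single i]
  · simp
  · intro j _ hj; simp [Pi.single_eq_of_ne hj]
  · simp

-- row of the multiplication matrix, interior case
lemma stmt17_mulVec_mem {K : Type*} [Field K] {n : ℕ} (I : Finset (Fin n → ℕ))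
    (a : (Fin n → ℕ) → (Fin n → ℕ) → K) (i : Fin n) (w : ↥I → K) (β : ↥I)
    (h : (β : Fin n → ℕ) + Pi.single i 1 ∈ I) :
    (multMat I a i *ᵥ w) β = w ⟨(β : Fin n → ℕ) + Pi.single i 1, h⟩ := by
  simp only [Matrix.mulVec, dotProduct, multMat, if_pos h]
  rw [Finset.sum_eq_single (⟨(β : Fin n → ℕ) + Pi.single i 1, h⟩ : ↥I)]
  · simp
  · intro γ _ hγ
    rw [if_neg, zero_mul]
    exact fun hc => hγ (Subtype.ext hc)
  · simp
-- border case
lemma stmt17_mulVec_not_mem {K : Type*} [Field K] {n : ℕ} (I : Finset (Fin n → ℕ))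
    (a : (Fin n → ℕ) → (Fin n → ℕ) → K) (i : Fin n) (w : ↥I → K) (β : ↥I)
    (h : (β : Fin n → ℕ) + Pi.single i 1 ∉ I) :
    (multMat I a i *ᵥ w) β = ∑ γ : ↥I, a ((β : Fin n → ℕ) + Pi.single i 1) γ * w γ := by
  simp only [Matrix.mulVec, dotProduct, multMat, if_neg h]

-- solution ⇒ monVec is a joint eigenvector of the multiplication matrices
lemma stmt17_eig_of_sol {K : Type*} [Field K] {n : ℕ} (I : Finset (Fin n → ℕ))
    (a : (Fin n → ℕ) → (Fin n → ℕ) → K) (lam : Fin n → K) (hsol : IsSolB I a lam) (i : Fin n) :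
    multMat I a i *ᵥ monVec I lam = lam i • monVec I lam := by
  funext β
  by_cases h : (β : Fin n → ℕ) + Pi.single i 1 ∈ I
  · rw [stmt17_mulVec_mem I a i _ β h]
    simp only [monVec, Pi.smul_apply, smul_eq_mul]
    exact stmt17_prod_pow_single lam (β : Fin n → ℕ) i
  · rw [stmt17_mulVec_not_mem I a i _ β h]
    have hb : InBorder I ((β : Fin n → ℕ) + Pi.single i 1) := ⟨h, β, β.2, i, rfl⟩
    simp only [monVec]
    have hsum : ∑ γ : ↥I, a ((β : Fin n → ℕ) + Pi.single i 1) ↑γ * ∏ j, lam j ^ (γ : Fin n → ℕ) j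
        = ∑ b ∈ I, a ((β : Fin n → ℕ) + Pi.single i 1) b * ∏ j, lam j ^ b j :=
      Finset.sum_coe_sort I (fun b => a ((β : Fin n → ℕ) + Pi.single i 1) b * ∏ j, lam j ^ b j)
    rw [hsum, ← hsol _ hb]
    simp only [Pi.smul_apply, smul_eq_mul]
    exact stmt17_prod_pow_single lam (β : Fin n → ℕ) i

-- joint eigenvector of the multiplication matrices ⇒ solution
lemma stmt17_sol_of_eig {K : Type*} [Field K] {n : ℕ} (I : Finset (Fin n → ℕ))
    (hI : IsLower I) (h0 : (0 : Fin n → ℕ) ∈ I)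
    (a : (Fin n → ℕ) → (Fin n → ℕ) → K) (lam : Fin n → K) (w : ↥I → K) (hw : w ≠ 0)
    (he : ∀ i, multMat I a i *ᵥ w = lam i • w) : IsSolB I a lam := by
  have key : ∀ d : ℕ, ∀ β : Fin n → ℕ, ∀ hβ : β ∈ I, mdeg β ≤ d →
      w ⟨β, hβ⟩ = (∏ j, lam j ^ β j) * w ⟨0, h0⟩ := by
    intro d
    induction d with
    | zero =>
      intro β hβ hd
      have hβ0 : β = 0 := by
        funext j
        have := Finset.sum_eq_zero_iff.mp (Nat.le_zero.mp hd) j (Finset.mem_univ j)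
        simpa using this
      subst hβ0
      simp
    | succ d ih =>
      intro β hβ hd
      by_cases hβ0 : β = 0
      · subst hβ0; simp
      · obtain ⟨i, hi⟩ : ∃ i, β i ≠ 0 := by
          by_contra hc
          push_neg at hc
          exact hβ0 (funext fun j => hc j)
        set β' : Fin n → ℕ := β - Pi.single i 1 with hβ'
        have hle : ∀ j, β' j ≤ β j := fun j => Nat.sub_le _ _
        have hβ'I : β' ∈ I := hI β hβ β' hle
        have hsum : β' + Pi.single i 1 = β := by
          funext j
          by_cases hj : j = i
          · subst hj
            simp only [Pi.add_apply, Pi.single_eq_same, hβ', Pi.sub_apply]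
            omega
          · simp [hβ', Pi.single_eq_of_ne hj]
        have hmdeg : mdeg β' ≤ d := by
          have h1 : mdeg (β' + Pi.single i 1) = mdeg β' + 1 := by
            simp only [mdeg, Pi.add_apply, Finset.sum_add_distrib]
            congr 1
            exact Finset.sum_pi_single' i 1 Finset.univ |>.trans (by simp)
          have := hsum ▸ h1
          omega
        have hmem : (β' : Fin n → ℕ) + Pi.single i 1 ∈ I := by rw [hsum]; exact hβ
        have hrow := congrFun (he i) ⟨β', hβ'I⟩
        rw [stmt17_mulVec_mem I a i w ⟨β', hβ'I⟩ hmem] at hrow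
        have heq : w ⟨β' + Pi.single i 1, hmem⟩ = w ⟨β, hβ⟩ := by congr 1; exact Subtype.ext hsum
        rw [heq] at hrow
        show w ⟨β, hβ⟩ = _
        rw [hrow]
        show lam i * w ⟨β', hβ'I⟩ = _
        rw [ih β' hβ'I hmdeg, ← hsum, stmt17_prod_pow_single lam β' i, mul_assoc]
  have hwβ : ∀ (β : ↥I), w β = (∏ j, lam j ^ (β : Fin n → ℕ) j) * w ⟨0, h0⟩ := by
    intro β
    have := key (mdeg (β : Fin n → ℕ)) (β : Fin n → ℕ) β.2 (le_refl (mdeg (β : Fin n → ℕ)))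
    simpa using this
  have hw0 : w ⟨0, h0⟩ ≠ 0 := by
    intro hc
    apply hw
    funext β
    rw [hwβ β, hc, mul_zero]
    simp
  intro α hα
  obtain ⟨hαI, β, hβ, i, hαeq⟩ := hα
  have hmem : (β : Fin n → ℕ) + Pi.single i 1 ∉ I := by rw [← hαeq]; exact hαI
  have hrow := congrFun (he i) ⟨β, hβ⟩
  rw [stmt17_mulVec_not_mem I a i w ⟨β, hβ⟩ hmem] at hrow
  rw [Pi.smul_apply, smul_eq_mul] at hrow
  have hL : ∑ γ : ↥I, a α ↑γ * w γ = lam i * w ⟨β, hβ⟩ := by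
    rw [← hrow]
    exact Finset.sum_congr rfl fun γ _ => by rw [hαeq]
  have hR : ∑ γ : ↥I, a α ↑γ * w γ
      = (∑ γ : ↥I, a α ↑γ * ∏ j, lam j ^ (γ : Fin n → ℕ) j) * w ⟨0, h0⟩ := by
    rw [Finset.sum_mul]
    exact Finset.sum_congr rfl fun γ _ => by rw [hwβ γ, mul_assoc]
  have hRHS : lam i * w ⟨β, hβ⟩ = (∏ j, lam j ^ α j) * w ⟨0, h0⟩ := by
    rw [hwβ ⟨β, hβ⟩, hαeq, stmt17_prod_pow_single lam β i, mul_assoc]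
  have hfin : (∑ γ : ↥I, a α ↑γ * ∏ j, lam j ^ (γ : Fin n → ℕ) j) * w ⟨0, h0⟩
      = (∏ j, lam j ^ α j) * w ⟨0, h0⟩ := by rw [← hR, hL, hRHS]
  have hmain := mul_right_cancel₀ hw0 hfin
  rw [← hmain]
  exact Finset.sum_coe_sort I (fun b => a α b * ∏ j, lam j ^ b j)


/-- For commuting multiplication matrices, `λ` is a solution of the system iff it is a
joint eigenvalue tuple of `(A_1, …, A_n)`, i.e. there is a nonzero `v` with
`A_iᵀ v = λ_i v` for all `i`. -/
theorem stmt_17 {K : Type*} [Field K] [IsAlgClosed K] {n : ℕ} (I : Finset (Fin n → ℕ))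
    (hI : IsLower I) (h0 : (0 : Fin n → ℕ) ∈ I) (a : (Fin n → ℕ) → (Fin n → ℕ) → K)
    (hcomm : ∀ i j, multMat I a i * multMat I a j = multMat I a j * multMat I a i)
    (lam : Fin n → K) :
    IsSolB I a lam ↔
      ∃ v : ↥I → K, v ≠ 0 ∧ ∀ i, (multMat I a i)ᵀ *ᵥ v = lam i • v := by
  constructor
  · intro hsol
    set B : Fin n → Matrix ↥I ↥I K := fun i => multMat I a i - lam i • 1 with hB
    have hBc : ∀ i j, B i * B j = B j * B i := by
      intro i j
      simp only [hB, sub_mul, mul_sub, Matrix.smul_mul, Matrix.mul_smul, one_mul, mul_one,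
        hcomm i j, smul_smul, mul_comm (lam j) (lam i)]
      abel
    have hmv : monVec I lam ≠ 0 := by
      intro hc
      have h1 := congrFun hc ⟨0, h0⟩
      simp [monVec] at h1
    have hBv : ∀ i, B i *ᵥ monVec I lam = 0 := by
      intro i
      show (multMat I a i - lam i • 1) *ᵥ monVec I lam = 0
      rw [Matrix.sub_mulVec, stmt17_eig_of_sol I a lam hsol i, Matrix.smul_mulVec,
        Matrix.one_mulVec, sub_self]
    obtain ⟨w, hw0, hwk⟩ := stmt17_transpose_ker B (stmt17_nak_step B hBc _ hmv hBv)
    refine ⟨w, hw0, fun i => ?_⟩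
    have h2 := hwk i
    have hBT : (B i)ᵀ = (multMat I a i)ᵀ - lam i • 1 := by
      show (multMat I a i - lam i • 1)ᵀ = _
      rw [Matrix.transpose_sub, Matrix.transpose_smul, Matrix.transpose_one]
    rw [hBT, Matrix.sub_mulVec, Matrix.smul_mulVec, Matrix.one_mulVec,
      sub_eq_zero] at h2
    exact h2
  · rintro ⟨v, hv0, hv⟩
    set B : Fin n → Matrix ↥I ↥I K := fun i => (multMat I a i)ᵀ - lam i • 1 with hB
    have hBc : ∀ i j, B i * B j = B j * B i := by
      intro i j
      have ht : (multMat I a i)ᵀ * (multMat I a j)ᵀ = (multMat I a j)ᵀ * (multMat I a i)ᵀ := by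
        rw [← Matrix.transpose_mul, ← Matrix.transpose_mul, hcomm i j]
      simp only [hB, sub_mul, mul_sub, Matrix.smul_mul, Matrix.mul_smul, one_mul, mul_one,
        ht, smul_smul, mul_comm (lam j) (lam i)]
      abel
    have hBv : ∀ i, B i *ᵥ v = 0 := by
      intro i
      show ((multMat I a i)ᵀ - lam i • 1) *ᵥ v = 0
      rw [Matrix.sub_mulVec, hv i, Matrix.smul_mulVec, Matrix.one_mulVec, sub_self]
    obtain ⟨w, hw0, hwk⟩ := stmt17_transpose_ker B (stmt17_nak_step B hBc _ hv0 hBv)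
    have hwe : ∀ i, multMat I a i *ᵥ w = lam i • w := by
      intro i
      have h2 := hwk i
      have hBT : (B i)ᵀ = multMat I a i - lam i • 1 := by
        show ((multMat I a i)ᵀ - lam i • 1)ᵀ = _
        rw [Matrix.transpose_sub, Matrix.transpose_smul, Matrix.transpose_one,
          Matrix.transpose_transpose]
      rw [hBT, Matrix.sub_mulVec, Matrix.smul_mulVec, Matrix.one_mulVec,
        sub_eq_zero] at h2
      exact h2
    exact stmt17_sol_of_eig I hI h0 a lam w hw0 hwe
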